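/- Let ρ₁, ρ₂ be valid ρ-functions with derivatives ψ₁, ψ₂. Under the residual-form ROTOT setup, fix reals y_{nj} and f_{nj} for all n, j, and for b ∈ ℝ^J define the residuals r_{nj}(b) := y_{nj} − b_j − f_{nj} and G(b) := L(r(b)). Fix b ∈ ℝ^J such that D_n(r(b)) > 0 for every n. Then for each j ∈ {1,…,J}, the partial derivative of G with respect to b_j at b exists and equals −(1/(2m)) Σ_{n=1}^N a_n m_{nj} · (σ₂ ψ₂(D_n(r(b))/σ₂)/D_n(r(b))) · σ_j ψ₁(r_{nj}(b)/σ_j). (This is the gradient computation behind the first-order condition for the intercept in the ROTOT objective.) -/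

import Mathlib

open Finset

/-- A valid ρ-function: continuous and differentiable, even, nondecreasing in `|z|`,
vanishing at zero, bounded, and such that `z ↦ ρ (√z)` is concave on `[0, ∞)`. -/
structure IsValidRho (ρ : ℝ → ℝ) : Prop where
  continuous : Continuous ρ
  differentiable : Differentiable ℝ ρ
  even : ∀ z : ℝ, ρ (-z) = ρ z
  mono_abs : ∀ z w : ℝ, |z| ≤ |w| → ρ z ≤ ρ w
  map_zero : ρ 0 = 0
  bounded : ∃ M : ℝ, ∀ z : ℝ, ρ z ≤ M
  sqrt_concave : ConcaveOn ℝ (Set.Ici (0 : ℝ)) (fun z => ρ (Real.sqrt z))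

/-- Casewise deviation `D_n(r) = √( (1/m_n) Σ_j m_{nj} σ_j² ρ₁(r_{nj}/σ_j) )`. -/
noncomputable def Dn (ρ₁ : ℝ → ℝ) {N J : ℕ} (mk : Fin N → Fin J → ℝ)
    (σ : Fin J → ℝ) (r : Fin N → Fin J → ℝ) (n : Fin N) : ℝ :=
  Real.sqrt ((1 / ∑ j, mk n j) * ∑ j, mk n j * (σ j) ^ 2 * ρ₁ (r n j / σ j))

/-- ROTOT objective `L(r) = (σ₂²/m) Σ_n m_n a_n ρ₂(D_n(r)/σ₂)`. -/
noncomputable def Lobj (ρ₁ ρ₂ : ℝ → ℝ) {N J : ℕ} (mk : Fin N → Fin J → ℝ)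
    (a : Fin N → ℝ) (σ : Fin J → ℝ) (σ₂ : ℝ) (r : Fin N → Fin J → ℝ) : ℝ :=
  (σ₂ ^ 2 / ∑ n, ∑ j, mk n j) *
    ∑ n, (∑ j, mk n j) * a n * ρ₂ (Dn ρ₁ mk σ r n / σ₂)

/-- The partial derivative of the ROTOT objective with respect to the `j`-th
intercept coordinate `b_j` equals
`−(1/(2m)) Σ_n a_n m_{nj} (σ₂ ψ₂(D_n/σ₂)/D_n) σ_j ψ₁(r_{nj}/σ_j)`. -/
theorem intercept_gradient
    (ρ₁ ρ₂ : ℝ → ℝ) (h₁ : IsValidRho ρ₁) (h₂ : IsValidRho ρ₂)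
    (N J : ℕ) (hN : 1 ≤ N) (hJ : 1 ≤ J)
    (mk : Fin N → Fin J → ℝ) (hmk : ∀ n j, mk n j = 0 ∨ mk n j = 1)
    (hmn : ∀ n, 0 < ∑ j, mk n j)
    (a : Fin N → ℝ) (ha : ∀ n, 0 ≤ a n ∧ a n ≤ 1)
    (σ : Fin J → ℝ) (hσ : ∀ j, 0 < σ j)
    (σ₂ : ℝ) (hσ₂ : 0 < σ₂)
    (y f : Fin N → Fin J → ℝ)
    (res : (Fin J → ℝ) → Fin N → Fin J → ℝ)
    (hres : ∀ (b : Fin J → ℝ) (n : Fin N) (j : Fin J), res b n j = y n j - b j - f n j)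
    (b : Fin J → ℝ)
    (hD : ∀ n, 0 < Dn ρ₁ mk σ (res b) n)
    (j : Fin J) :
    HasDerivAt
      (fun x : ℝ => Lobj ρ₁ ρ₂ mk a σ σ₂ (res (Function.update b j x)))
      (-(1 / (2 * ∑ n, ∑ j', mk n j')) *
        ∑ n, a n * mk n j *
          (σ₂ * deriv ρ₂ (Dn ρ₁ mk σ (res b) n / σ₂) / Dn ρ₁ mk σ (res b) n) *
          (σ j * deriv ρ₁ (res b n j / σ j)))
      (b j) := by
  have hM : (0:ℝ) < ∑ n, ∑ j', mk n j' :=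
    Finset.sum_pos (fun n _ => hmn n) ⟨⟨0, hN⟩, Finset.mem_univ _⟩
  have hinner : ∀ n, (0:ℝ) <
      (1 / ∑ j', mk n j') * ∑ j', mk n j' * (σ j') ^ 2 * ρ₁ (res b n j' / σ j') := by
    intro n
    have := hD n
    rw [Dn] at this
    exact Real.sqrt_pos.mp this
  -- value of the inner expression at x = b j
  have hval : ∀ n, (1 / ∑ j', mk n j') *
      ∑ j', mk n j' * (σ j') ^ 2 * ρ₁ ((y n j' - Function.update b j (b j) j' - f n j') / σ j')
      = (1 / ∑ j', mk n j') * ∑ j', mk n j' * (σ j') ^ 2 * ρ₁ (res b n j' / σ j') := by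
    intro n
    simp [Function.update_eq_self, hres]
  -- derivative of the inner expression
  have key : ∀ n, HasDerivAt
      (fun x => (1 / ∑ j', mk n j') *
        ∑ j', mk n j' * (σ j') ^ 2 * ρ₁ ((y n j' - Function.update b j x j' - f n j') / σ j'))
      ((1 / ∑ j', mk n j') *
        (mk n j * (σ j) ^ 2 * (deriv ρ₁ (res b n j / σ j) * (-(1 / σ j)))))
      (b j) := by
    intro n
    have hterm : ∀ j' : Fin J, HasDerivAt
        (fun x => mk n j' * (σ j') ^ 2 * ρ₁ ((y n j' - Function.update b j x j' - f n j') / σ j'))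
        (if j' = j then mk n j * (σ j) ^ 2 * (deriv ρ₁ (res b n j / σ j) * (-(1 / σ j))) else 0)
        (b j) := by
      intro j'
      by_cases h : j' = j
      · subst h
        simp only [if_pos rfl, Function.update_self]
        have h1 : HasDerivAt (fun x : ℝ => (y n j' - x - f n j') / σ j') (-(1 / σ j')) (b j') := by
          have h0 : HasDerivAt (fun x : ℝ => y n j' - x - f n j') (-1) (b j') := by
            simpa using ((hasDerivAt_id (b j')).const_sub (y n j')).sub_const (f n j')
          simpa [neg_div, one_div] using h0.div_const (σ j')
        have h2 : HasDerivAt ρ₁ (deriv ρ₁ ((y n j' - b j' - f n j') / σ j'))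
            ((y n j' - b j' - f n j') / σ j') := (h₁.differentiable _).hasDerivAt
        have h3 := h2.comp (b j') h1
        rw [hres]
        exact h3.const_mul _
      · simp only [if_neg h, Function.update_of_ne h]
        exact hasDerivAt_const _ _
    have hsum := HasDerivAt.fun_sum (fun j' (_ : j' ∈ Finset.univ) => hterm j')
    have h4 := hsum.const_mul (1 / ∑ j', mk n j')
    simpa using h4
  -- derivative of each per-case summand
  have key2 : ∀ n, HasDerivAt
      (fun x => (∑ j', mk n j') * a n *
        ρ₂ (Real.sqrt ((1 / ∑ j', mk n j') *
          ∑ j', mk n j' * (σ j') ^ 2 * ρ₁ ((y n j' - Function.update b j x j' - f n j') / σ j')) / σ₂))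
      ((∑ j', mk n j') * a n *
        (deriv ρ₂ (Dn ρ₁ mk σ (res b) n / σ₂) *
          (((1 / ∑ j', mk n j') *
            (mk n j * (σ j) ^ 2 * (deriv ρ₁ (res b n j / σ j) * (-(1 / σ j))))) /
            (2 * Dn ρ₁ mk σ (res b) n) / σ₂)))
      (b j) := by
    intro n
    have hne : (1 / ∑ j', mk n j') *
        ∑ j', mk n j' * (σ j') ^ 2 * ρ₁ ((y n j' - Function.update b j (b j) j' - f n j') / σ j') ≠ 0 := by
      rw [hval n]; exact (hinner n).ne'
    have hsq := (key n).sqrt hne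
    have hdiv := hsq.div_const σ₂
    have hρ : HasDerivAt ρ₂
        (deriv ρ₂ (Real.sqrt ((1 / ∑ j', mk n j') *
          ∑ j', mk n j' * (σ j') ^ 2 * ρ₁ ((y n j' - Function.update b j (b j) j' - f n j') / σ j')) / σ₂))
        (Real.sqrt ((1 / ∑ j', mk n j') *
          ∑ j', mk n j' * (σ j') ^ 2 * ρ₁ ((y n j' - Function.update b j (b j) j' - f n j') / σ j')) / σ₂) :=
      (h₂.differentiable _).hasDerivAt
    have h5 := hρ.comp (b j) hdiv
    have h6 := h5.const_mul ((∑ j', mk n j') * a n)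
    rw [hval n] at h6
    have hDval : Dn ρ₁ mk σ (res b) n = Real.sqrt ((1 / ∑ j', mk n j') *
        ∑ j', mk n j' * (σ j') ^ 2 * ρ₁ (res b n j' / σ j')) := rfl
    rw [hDval]
    exact h6
  have keysum := HasDerivAt.fun_sum (fun n (_ : n ∈ Finset.univ) => key2 n)
  have final := keysum.const_mul (σ₂ ^ 2 / ∑ n, ∑ j', mk n j')
  have hfun : (fun x : ℝ => Lobj ρ₁ ρ₂ mk a σ σ₂ (res (Function.update b j x))) =
      (fun x : ℝ => (σ₂ ^ 2 / ∑ n, ∑ j', mk n j') *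
        ∑ n, (∑ j', mk n j') * a n *
          ρ₂ (Real.sqrt ((1 / ∑ j', mk n j') *
            ∑ j', mk n j' * (σ j') ^ 2 * ρ₁ ((y n j' - Function.update b j x j' - f n j') / σ j')) / σ₂)) := by
    funext x
    simp only [Lobj, Dn, hres]
  rw [hfun]
  have hMne : (∑ n, ∑ j', mk n j') ≠ 0 := hM.ne'
  convert final using 1
  case e'_4 => rfl
  case e'_5 => rfl
  generalize hMG : (∑ n, ∑ j', mk n j') = M at *
  rw [Finset.mul_sum, Finset.mul_sum]
  refine Finset.sum_congr rfl fun n _ => ?_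
  have hDn : Dn ρ₁ mk σ (res b) n ≠ 0 := (hD n).ne'
  have hmne : (∑ j', mk n j') ≠ 0 := (hmn n).ne'
  have hσj : σ j ≠ 0 := (hσ j).ne'
  have hσ₂' : σ₂ ≠ 0 := hσ₂.ne'
  field_simp
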